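/- Let γ(r) = r(2 + ln_− r)² for 0 ≤ r ≤ 1 and γ(r) = 4 for r > 1. Then γ is continuous, nondecreasing, and concave on [0,∞). -/

import Mathlib

noncomputable def lnm (r : ℝ) : ℝ := max (-Real.log r) 0

noncomputable def gam (r : ℝ) : ℝ := if r ≤ 1 then r * (2 + lnm r) ^ 2 else 4

noncomputable def gam' (r : ℝ) : ℝ :=
  if r < 1 then (Real.log r) ^ 2 - 2 * Real.log r else 0

lemma gam_eq_f1 {r : ℝ} (hr0 : 0 < r) (hr1 : r ≤ 1) :
    gam r = r * (2 - Real.log r) ^ 2 := by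
  have hlog : Real.log r ≤ 0 := Real.log_nonpos hr0.le hr1
  have hm : lnm r = -Real.log r := max_eq_left (by linarith)
  rw [gam, if_pos hr1, hm]
  ring

lemma gam_eq_four {r : ℝ} (hr : 1 ≤ r) : gam r = 4 := by
  rcases eq_or_lt_of_le hr with h | h
  · simp [gam, ← h, lnm]; norm_num
  · simp [gam, not_le.2 h]

lemma f1_hasDerivAt {x : ℝ} (hx : 0 < x) :
    HasDerivAt (fun r : ℝ => r * (2 - Real.log r) ^ 2)
      ((Real.log x) ^ 2 - 2 * Real.log x) x := by
  have hlog : HasDerivAt Real.log x⁻¹ x := Real.hasDerivAt_log hx.ne'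
  have h2 := ((hasDerivAt_const x (2:ℝ)).sub hlog).pow 2
  have h3 := (hasDerivAt_id x).mul h2
  convert h3 using 1
  · rfl
  · rfl
  · rfl
  simp only [Pi.sub_apply, Pi.pow_apply, id]
  field_simp
  ring

lemma gam_hasDerivAt {x : ℝ} (hx : 0 < x) : HasDerivAt gam (gam' x) x := by
  rcases lt_trichotomy x 1 with h1 | h1 | h1
  · have hev : gam =ᶠ[nhds x] fun r : ℝ => r * (2 - Real.log r) ^ 2 := by
      filter_upwards [Ioo_mem_nhds hx h1] with r hr
      exact gam_eq_f1 hr.1 hr.2.le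
    have := (f1_hasDerivAt hx).congr_of_eventuallyEq hev
    simpa [gam', h1] using this
  · subst h1
    have hleft : HasDerivWithinAt gam 0 (Set.Iic 1) 1 := by
      have hf : HasDerivWithinAt (fun r : ℝ => r * (2 - Real.log r) ^ 2) 0 (Set.Iic 1) 1 := by
        have := (f1_hasDerivAt one_pos).hasDerivWithinAt (s := Set.Iic 1)
        simpa using this
      have hev : gam =ᶠ[nhdsWithin 1 (Set.Iic 1)] fun r : ℝ => r * (2 - Real.log r) ^ 2 := by
        filter_upwards [mem_nhdsWithin_of_mem_nhds (Ioi_mem_nhds one_pos),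
          self_mem_nhdsWithin] with r hr hr'
        exact gam_eq_f1 hr hr'
      exact hf.congr_of_eventuallyEq hev (by simpa using gam_eq_f1 one_pos le_rfl)
    have hright : HasDerivWithinAt gam 0 (Set.Ici 1) 1 := by
      have hf : HasDerivWithinAt (fun _ : ℝ => (4:ℝ)) 0 (Set.Ici 1) 1 :=
        (hasDerivAt_const 1 (4:ℝ)).hasDerivWithinAt
      exact hf.congr_of_mem (fun r hr => gam_eq_four hr) (by simp [Set.mem_Ici])
    have := hleft.union hright
    rw [Set.Iic_union_Ici, hasDerivWithinAt_univ] at this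
    simpa [gam'] using this
  · have hev : gam =ᶠ[nhds x] fun _ : ℝ => (4:ℝ) := by
      filter_upwards [Ioi_mem_nhds h1] with r hr
      exact gam_eq_four hr.le
    have := (hasDerivAt_const x (4:ℝ)).congr_of_eventuallyEq hev
    simpa [gam', not_lt.2 h1.le] using this

lemma gam'_nonneg {x : ℝ} (hx : 0 < x) : 0 ≤ gam' x := by
  unfold gam'
  split_ifs with h
  · have := Real.log_nonpos hx.le h.le
    nlinarith
  · rfl

lemma gam'_antitone : AntitoneOn gam' (Set.Ioi 0) := by
  intro a ha b hb hab
  simp only [Set.mem_Ioi] at ha hb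
  unfold gam'
  split_ifs with h1 h2 h2
  · have hla : Real.log a ≤ Real.log b := Real.log_le_log ha hab
    have hlb : Real.log b ≤ 0 := Real.log_nonpos hb.le h1.le
    nlinarith
  · exact absurd (hab.trans_lt h1) h2
  · have hla : Real.log a ≤ 0 := Real.log_nonpos ha.le h2.le
    nlinarith
  · exact le_refl _

lemma gam_cwa_zero : ContinuousWithinAt gam (Set.Ici 0) 0 := by
  rw [← Set.Ioi_insert, continuousWithinAt_insert_self]
  have hgam0 : gam 0 = 0 := by simp [gam]
  rw [ContinuousWithinAt, hgam0]
  have hA : Filter.Tendsto (fun r : ℝ => 4 * r) (nhdsWithin 0 (Set.Ioi 0)) (nhds 0) := by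
    have : Filter.Tendsto (fun r : ℝ => 4 * r) (nhds 0) (nhds 0) := by
      simpa using (continuous_const.mul continuous_id).tendsto (0:ℝ) (f := fun r : ℝ => (4:ℝ) * r)
    exact this.mono_left nhdsWithin_le_nhds
  have hB : Filter.Tendsto (fun r : ℝ => Real.log r * r) (nhdsWithin 0 (Set.Ioi 0)) (nhds 0) := by
    have := tendsto_log_mul_rpow_nhdsGT_zero one_pos
    refine this.congr' ?_
    filter_upwards with r
    rw [Real.rpow_one]
  have hC : Filter.Tendsto (fun r : ℝ => (Real.log r * r ^ (2⁻¹ : ℝ)) ^ 2)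
      (nhdsWithin 0 (Set.Ioi 0)) (nhds 0) := by
    have := (tendsto_log_mul_rpow_nhdsGT_zero (by norm_num : (0:ℝ) < 2⁻¹)).pow 2
    simpa using this
  have hsum := (hA.sub (hB.const_mul 4)).add hC
  simp only [mul_zero, sub_zero, add_zero, zero_add] at hsum
  refine hsum.congr' ?_
  filter_upwards [mem_nhdsWithin_of_mem_nhds (Iic_mem_nhds one_pos),
    self_mem_nhdsWithin] with r h1 h0
  have hsq : (r ^ (2⁻¹ : ℝ)) ^ 2 = r := by
    rw [← Real.rpow_natCast (r ^ (2⁻¹ : ℝ)) 2, ← Real.rpow_mul (le_of_lt h0)]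
    norm_num
  rw [gam_eq_f1 h0 h1, mul_pow, hsq]
  ring

theorem gam_continuous_monotone_concave :
    ContinuousOn gam (Set.Ici 0) ∧ MonotoneOn gam (Set.Ici 0) ∧
      ConcaveOn ℝ (Set.Ici 0) gam := by
  have hcont : ContinuousOn gam (Set.Ici 0) := by
    intro x hx
    rcases eq_or_lt_of_le (Set.mem_Ici.1 hx) with h | h
    · rw [← h]; exact gam_cwa_zero
    · exact (gam_hasDerivAt h).continuousAt.continuousWithinAt
  have hdiff : DifferentiableOn ℝ gam (interior (Set.Ici (0:ℝ))) := by
    rw [interior_Ici]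
    intro x hx
    exact (gam_hasDerivAt hx).differentiableAt.differentiableWithinAt
  refine ⟨hcont, ?_, ?_⟩
  · refine monotoneOn_of_deriv_nonneg (convex_Ici 0) hcont hdiff fun x hx => ?_
    rw [interior_Ici] at hx
    rw [(gam_hasDerivAt hx).deriv]
    exact gam'_nonneg hx
  · refine AntitoneOn.concaveOn_of_deriv (convex_Ici 0) hcont hdiff ?_
    rw [interior_Ici]
    intro a ha b hb hab
    rw [(gam_hasDerivAt ha).deriv, (gam_hasDerivAt hb).deriv]
    exact gam'_antitone ha hb hab
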